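/- arXiv:2006.11589 — 7 statements merged into one kernel-verified Lean document; each statement's English description precedes it below -/
import Mathlib

section
/- Let r, γ, n be positive integers with n ≥ γ ≥ r+1 > 2, and let f : ℕ → ℝ be a positive-valued function. Then the minimum over all reals x_2,...,x_r, y_2,...,y_r satisfying (i) 0 ≤ y_j ≤ x_j for all j ∈ {2,...,r}, (ii) ∑_{j=2}^r x_j = 1, and (iii) γ·∑_{j=2}^r y_j ≤ ∑_{j=2}^r j·x_j, of the objective ∑_{j=2}^r (x_j − y_j)·f(n−j+1), equals min over 2 ≤ j ≤ r of (1 − j/(γ−r+j))·f(n−j+1). -/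
open Finset

/-- The LP lemma: the minimum value of the linear program equals
`min_{2 ≤ j ≤ r} (1 - j/(γ-r+j)) f(n-j+1)`. -/
theorem lp_lemma (r γ n : ℕ) (hr : 2 < r + 1) (hγr : r + 1 ≤ γ) (hnγ : γ ≤ n)
    (f : ℕ → ℝ) (hf : ∀ m, 0 < f m) :
    IsLeast
      {v : ℝ | ∃ x y : ℕ → ℝ,
        (∀ j ∈ Finset.Icc 2 r, 0 ≤ y j ∧ y j ≤ x j) ∧
        (∑ j ∈ Finset.Icc 2 r, x j = 1) ∧
        ((γ : ℝ) * ∑ j ∈ Finset.Icc 2 r, y j ≤ ∑ j ∈ Finset.Icc 2 r, (j : ℝ) * x j) ∧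
        v = ∑ j ∈ Finset.Icc 2 r, (x j - y j) * f (n - j + 1)}
      ((Finset.Icc 2 r).inf' (Finset.nonempty_Icc.mpr (by omega))
        (fun j => (1 - (j : ℝ) / ((γ : ℝ) - (r : ℝ) + (j : ℝ))) * f (n - j + 1))) := by
  have hne : (Finset.Icc 2 r).Nonempty := Finset.nonempty_Icc.mpr (by omega)
  have hγrpos : (0:ℝ) < (γ:ℝ) - r := by
    have : (r:ℝ) < γ := by exact_mod_cast (by omega : r < γ)
    linarith
  set m := (Finset.Icc 2 r).inf' (Finset.nonempty_Icc.mpr (by omega))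
      (fun j => (1 - (j : ℝ) / ((γ : ℝ) - (r : ℝ) + (j : ℝ))) * f (n - j + 1)) with hm
  have hDpos : ∀ j ∈ Finset.Icc 2 r, (0:ℝ) < (γ:ℝ) - r + j := by
    intro j hj
    have : (0:ℝ) ≤ (j:ℝ) := Nat.cast_nonneg j
    linarith
  have hterm_pos : ∀ j ∈ Finset.Icc 2 r,
      (0:ℝ) < (1 - (j : ℝ) / ((γ : ℝ) - (r : ℝ) + (j : ℝ))) * f (n - j + 1) := by
    intro j hj
    have hD := hDpos j hj
    have : (j:ℝ) / ((γ:ℝ) - r + j) < 1 := by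
      rw [div_lt_one hD]; linarith
    have := hf (n - j + 1)
    nlinarith
  have hmpos : (0:ℝ) < m := by
    rw [hm, Finset.lt_inf'_iff]
    exact hterm_pos
  constructor
  · -- membership: the minimum is attained
    obtain ⟨j0, hj0mem, hj0eq⟩ := Finset.exists_mem_eq_inf' hne
      (fun j => (1 - (j : ℝ) / ((γ : ℝ) - (r : ℝ) + (j : ℝ))) * f (n - j + 1))
    have hj0 := Finset.mem_Icc.mp hj0mem
    have hD : (0:ℝ) < (γ:ℝ) - r + j0 := hDpos j0 hj0mem
    set t : ℝ := (j0:ℝ) / ((γ:ℝ) - r + j0) with ht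
    have ht0 : 0 ≤ t := div_nonneg (Nat.cast_nonneg j0) hD.le
    have ht1 : t ≤ 1 := by
      rw [ht, div_le_one hD]; linarith
    have hrmem : r ∈ Finset.Icc 2 r := Finset.mem_Icc.mpr ⟨by omega, le_rfl⟩
    refine ⟨fun j => (if j = r then t else 0) + (if j = j0 then 1 - t else 0),
      fun j => if j = r then t else 0, ?_, ?_, ?_, ?_⟩
    · intro j hj
      dsimp only
      constructor
      · split_ifs <;> simp [ht0]
      · have h : ((if j = r then t else 0) + (if j = j0 then 1 - t else 0))
            - (if j = r then t else 0) = (if j = j0 then 1 - t else 0) := by ring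
        split_ifs at h ⊢ <;> nlinarith
    · rw [Finset.sum_add_distrib, Finset.sum_ite_eq' _ r, Finset.sum_ite_eq' _ j0,
        if_pos hrmem, if_pos hj0mem]
      ring
    · simp only [Finset.sum_ite_eq' _ r, if_pos hrmem, mul_add, mul_ite, mul_zero,
        Finset.sum_add_distrib, Finset.sum_ite_eq', if_pos hj0mem]
      rw [ht]
      rw [div_eq_iff hD.ne'] at *
      apply le_of_eq
      field_simp
      ring
    · have hxy : ∀ j, ((if j = r then t else 0) + (if j = j0 then 1 - t else 0))
          - (if j = r then t else 0) = (if j = j0 then 1 - t else 0) := by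
        intro j; ring
      simp only [hxy, ite_mul, zero_mul, Finset.sum_ite_eq', if_pos hj0mem]
      exact hj0eq
  · -- lower bound
    rintro v ⟨x, y, hxy, hsum, hcons, rfl⟩
    set β : ℝ := m / ((γ:ℝ) - r) with hβ
    have hβ0 : 0 ≤ β := div_nonneg hmpos.le hγrpos.le
    have hβm : β * ((γ:ℝ) - r) = m := div_mul_cancel₀ m hγrpos.ne'
    have key : ∀ j ∈ Finset.Icc 2 r,
        m * x j + β * ((j:ℝ) * x j - (γ:ℝ) * y j) ≤ (x j - y j) * f (n - j + 1) := by
      intro j hj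
      have hjr : (j:ℝ) ≤ r := by exact_mod_cast (Finset.mem_Icc.mp hj).2
      have hD : (0:ℝ) < (γ:ℝ) - r + j := hDpos j hj
      have hmle : m ≤ (1 - (j : ℝ) / ((γ : ℝ) - (r : ℝ) + (j : ℝ))) * f (n - j + 1) :=
        hm ▸ Finset.inf'_le _ hj
      have h1 : m * ((γ:ℝ) - r + j) ≤ f (n - j + 1) * ((γ:ℝ) - r) := by
        have hone : (1 - (j : ℝ) / ((γ : ℝ) - (r : ℝ) + (j : ℝ)))
            = ((γ:ℝ) - r) / ((γ:ℝ) - r + j) := by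
          field_simp
          ring
        rw [hone, div_mul_eq_mul_div, le_div_iff₀ hD] at hmle
        linarith [hmle]
      -- A = c - βj - m ≥ 0
      have hA : 0 ≤ f (n - j + 1) - β * j - m := by
        nlinarith [h1, hβm, hγrpos]
      -- B = β(γ-j) - m ≥ 0
      have hB : 0 ≤ β * ((γ:ℝ) - j) - m := by
        nlinarith [hβm, mul_nonneg hβ0 (sub_nonneg.mpr hjr)]
      have hx := (hxy j hj)
      have hsub : 0 ≤ x j - y j := by linarith [hx.2]
      have hy0 : 0 ≤ y j := hx.1
      nlinarith [mul_nonneg hA hsub, mul_nonneg hB hy0]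
    have hsumle := Finset.sum_le_sum key
    rw [Finset.sum_add_distrib, ← Finset.mul_sum, hsum, mul_one, ← Finset.mul_sum,
      Finset.sum_sub_distrib, ← Finset.mul_sum] at hsumle
    have hnn : 0 ≤ β * (∑ j ∈ Finset.Icc 2 r, (j:ℝ) * x j
        - (γ:ℝ) * ∑ j ∈ Finset.Icc 2 r, y j) :=
      mul_nonneg hβ0 (by linarith)
    exact le_trans (le_add_of_nonneg_right hnn) hsumle
end

section
/- Let n, e, σ be positive integers with e ≥ 2 and n − e + 1 > 2σ. Then (C(n−e, σ)/C(n, σ)) · (1/C(n−e+1, 2σ)) ≥ 1/C(n, 2σ), where C(a,b) denotes the binomial coefficient a choose b. -/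
lemma descFac_ineq (σ m n : ℕ) (hσ : 0 < σ) (h2σ : 2*σ ≤ m) (hn : m + 2 ≤ n) :
    n.descFactorial σ * (m+1).descFactorial (2*σ) ≤
      m.descFactorial σ * n.descFactorial (2*σ) := by
  have split : ∀ N : ℕ, N.descFactorial (2*σ) =
      (N - σ).descFactorial σ * N.descFactorial σ := by
    intro N
    have := Nat.descFactorial_mul_descFactorial (k := σ) (m := 2*σ) (n := N)
      (by omega)
    rw [show 2*σ - σ = σ by omega] at this
    exact this.symm
  rw [split, split]
  obtain ⟨s, rfl⟩ : ∃ s, σ = s + 1 := ⟨σ - 1, by omega⟩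
  obtain ⟨a, rfl⟩ : ∃ a, m = 2*(s+1) + a := ⟨m - 2*(s+1), by omega⟩
  set σ := s + 1 with hσdef
  set m := 2*σ + a with hmdef
  set D1 := (σ+a+1).descFactorial s with hD1
  set D2 := m.descFactorial s with hD2
  have h1 : (m+1).descFactorial σ = (m+1) * D2 := Nat.succ_descFactorial_succ m s
  have h2 : m.descFactorial σ = (σ+a+1) * D2 := by
    rw [Nat.descFactorial_succ, show m - s = σ+a+1 by omega]
  have h3 : (m + 1 - σ) = σ + a + 1 := by omega
  have h4 : (σ+a+1).descFactorial σ = (a+2) * D1 := by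
    rw [Nat.descFactorial_succ, show σ+a+1-s = a+2 by omega]
  have hX : (σ+a+2) * D1 ≤ (n - σ).descFactorial σ := by
    calc (σ+a+2) * D1 = (σ+a+2).descFactorial σ :=
          (Nat.succ_descFactorial_succ (σ+a+1) s).symm
      _ ≤ (n - σ).descFactorial σ := Nat.descFactorial_le σ (by omega)
  rw [h1, h2, h3, h4]
  calc n.descFactorial σ * ((a+2) * D1 * ((m+1) * D2))
      = ((a+2) * (m+1)) * (D1 * D2 * n.descFactorial σ) := by ring
    _ ≤ ((σ+a+1) * (σ+a+2)) * (D1 * D2 * n.descFactorial σ) := by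
        apply Nat.mul_le_mul_right
        show (a+2)*((2*(s+1)+a)+1) ≤ ((s+1)+a+1)*((s+1)+a+2)
        nlinarith [sq_nonneg s]
    _ = (σ+a+1) * D2 * ((σ+a+2) * D1 * n.descFactorial σ) := by ring
    _ ≤ (σ+a+1) * D2 * ((n-σ).descFactorial σ * n.descFactorial σ) := by
        apply Nat.mul_le_mul_left
        exact Nat.mul_le_mul_right _ hX

lemma choose_ineq_aux (σ m n : ℕ) (hσ : 0 < σ) (h2σ : 2*σ ≤ m) (hn : m + 2 ≤ n) :
    n.choose σ * (m+1).choose (2*σ) ≤ m.choose σ * n.choose (2*σ) := by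
  have H := descFac_ineq σ m n hσ h2σ hn
  rw [Nat.descFactorial_eq_factorial_mul_choose, Nat.descFactorial_eq_factorial_mul_choose,
    Nat.descFactorial_eq_factorial_mul_choose, Nat.descFactorial_eq_factorial_mul_choose] at H
  have hpos : 0 < Nat.factorial σ * Nat.factorial (2*σ) := by positivity
  apply Nat.le_of_mul_le_mul_left _ hpos
  calc Nat.factorial σ * Nat.factorial (2*σ) * (n.choose σ * (m+1).choose (2*σ))
      = Nat.factorial σ * n.choose σ * (Nat.factorial (2*σ) * (m+1).choose (2*σ)) := by ring
    _ ≤ Nat.factorial σ * m.choose σ * (Nat.factorial (2*σ) * n.choose (2*σ)) := H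
    _ = Nat.factorial σ * Nat.factorial (2*σ) * (m.choose σ * n.choose (2*σ)) := by ring

/-- `(C(n-e,σ)/C(n,σ)) · (1/C(n-e+1,2σ)) ≥ 1/C(n,2σ)`. -/
theorem binomial_ratio_ineq (n e σ : ℕ) (hn : 0 < n) (he0 : 0 < e) (hσ : 0 < σ)
    (he : 2 ≤ e) (h : 2 * σ < n - e + 1) :
    ((n - e).choose σ : ℝ) / (n.choose σ) * (1 / ((n - e + 1).choose (2 * σ))) ≥
      1 / (n.choose (2 * σ)) := by
  set m := n - e with hm
  have h2σ : 2*σ ≤ m := by omega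
  have hmn : m + 2 ≤ n := by omega
  have p1 : 0 < n.choose σ := Nat.choose_pos (by omega)
  have p2 : 0 < (m+1).choose (2*σ) := Nat.choose_pos (by omega)
  have p3 : 0 < n.choose (2*σ) := Nat.choose_pos (by omega)
  rw [ge_iff_le, div_mul_div_comm, mul_one, div_le_div_iff₀ (by exact_mod_cast p3)
    (by positivity)]
  rw [one_mul]
  exact_mod_cast choose_ineq_aux σ m n hσ h2σ hmn
end

section
/- Let n, j, t, r be positive integers with n − j + 1 > rt, j > 2t, and j ≤ r. Then the product over ℓ from 0 to 2t−1 of (n − t(r−2) − ℓ)/(n − j + 1 − t(r−2) − ℓ) is at least 1 + jt/(n − rt). -/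
open Finset

/-- The telescoping product bound, case `j > 2t`:
`∏_{ℓ=0}^{2t-1} (n - t(r-2) - ℓ)/(n - j + 1 - t(r-2) - ℓ) ≥ 1 + jt/(n - rt)`. -/
theorem prod_ratio_large_j (n j t r : ℕ) (hn : 0 < n) (hj0 : 0 < j) (ht : 0 < t)
    (hr : 0 < r) (h1 : r * t < n - j + 1) (h2 : 2 * t < j) (h3 : j ≤ r) :
    ∏ ℓ ∈ Finset.range (2 * t),
        ((n : ℝ) - (t * (r - 2) : ℕ) - ℓ) / ((n : ℝ) - j + 1 - (t * (r - 2) : ℕ) - ℓ) ≥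
      1 + (j : ℝ) * t / ((n : ℝ) - r * t) := by
  have hj3 : 3 ≤ j := by omega
  have hr2 : 2 ≤ r := hj3.trans h3 |>.trans' (by norm_num)
  have hm1 : 1 ≤ r * t := Nat.one_le_iff_ne_zero.mpr (Nat.mul_ne_zero hr.ne' ht.ne')
  have h1' : r * t + j ≤ n := by
    set m := r * t with hm
    omega
  have hcast : ((t * (r - 2) : ℕ) : ℝ) = (r : ℝ) * t - 2 * t := by
    have h2r : ((r - 2 : ℕ) : ℝ) = (r : ℝ) - 2 := by
      push_cast [Nat.cast_sub hr2]; ring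
    push_cast [h2r]; ring
  have h1R : (r : ℝ) * t + j ≤ n := by exact_mod_cast h1'
  set B : ℝ := (n : ℝ) - j + 1 - ((t * (r - 2) : ℕ) : ℝ) with hBdef
  have hBval : B = (n : ℝ) - j + 1 - ((r : ℝ) * t - 2 * t) := by rw [hBdef, hcast]
  have htR : (1 : ℝ) ≤ t := by exact_mod_cast ht
  have hjR : (2 : ℝ) * t + 1 ≤ j := by exact_mod_cast h2
  have hBgt : (2 * t : ℝ) < B := by rw [hBval]; linarith
  have hBpos : (0 : ℝ) < B := lt_of_le_of_lt (by positivity) hBgt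
  have hDpos : (0 : ℝ) < (n : ℝ) - r * t := by linarith
  have hBD : B ≤ (n : ℝ) - r * t := by rw [hBval]; linarith
  have hq : (0 : ℝ) ≤ ((j : ℝ) - 1) / B := by
    apply div_nonneg _ hBpos.le
    linarith
  -- Step 1: product is at least (1 + (j-1)/B)^(2t)
  have step1 : (1 + ((j : ℝ) - 1) / B) ^ (2 * t) ≤
      ∏ ℓ ∈ Finset.range (2 * t),
        ((n : ℝ) - (t * (r - 2) : ℕ) - ℓ) / ((n : ℝ) - j + 1 - (t * (r - 2) : ℕ) - ℓ) := by
    rw [show (1 + ((j : ℝ) - 1) / B) ^ (2 * t) =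
        ∏ _ℓ ∈ Finset.range (2 * t), (1 + ((j : ℝ) - 1) / B) by simp]
    apply Finset.prod_le_prod
    · intro ℓ _; linarith
    · intro ℓ hℓ
      rw [Finset.mem_range] at hℓ
      have hℓR : (ℓ : ℝ) ≤ 2 * t - 1 := by
        have : (ℓ : ℝ) + 1 ≤ 2 * t := by exact_mod_cast hℓ
        linarith
      have hden : (0 : ℝ) < B - ℓ := by linarith
      have hdenB : B - ℓ ≤ B := by
        have : (0 : ℝ) ≤ ℓ := Nat.cast_nonneg ℓ
        linarith
      have hnum : (n : ℝ) - (t * (r - 2) : ℕ) - ℓ = (B - ℓ) + ((j : ℝ) - 1) := by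
        rw [hBdef]; ring
      have hden' : (n : ℝ) - j + 1 - (t * (r - 2) : ℕ) - ℓ = B - ℓ := by
        rw [hBdef]
      rw [hnum, hden']
      rw [add_div, div_self hden.ne']
      have : ((j : ℝ) - 1) / B ≤ ((j : ℝ) - 1) / (B - ℓ) :=
        div_le_div_of_nonneg_left (by linarith) hden hdenB
      linarith
  -- Step 2: Bernoulli
  have step2 : 1 + (2 * t : ℕ) * (((j : ℝ) - 1) / B) ≤ (1 + ((j : ℝ) - 1) / B) ^ (2 * t) :=
    one_add_mul_le_pow (by linarith) (2 * t)
  -- Step 3: compare with target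
  have step3 : (j : ℝ) * t / ((n : ℝ) - r * t) ≤ (2 * t : ℕ) * (((j : ℝ) - 1) / B) := by
    have hcast2 : ((2 * t : ℕ) : ℝ) = 2 * t := by push_cast; ring
    rw [hcast2, mul_div_assoc']
    apply div_le_div₀ (by nlinarith) (by nlinarith) hBpos hBD
  calc 1 + (j : ℝ) * t / ((n : ℝ) - r * t)
      ≤ 1 + (2 * t : ℕ) * (((j : ℝ) - 1) / B) := by linarith
    _ ≤ (1 + ((j : ℝ) - 1) / B) ^ (2 * t) := step2
    _ ≤ _ := step1
end

section
/- Let n, e, σ be positive integers with 2 ≤ e ≤ σ and n − e + 1 > 2σ. Then (∏_{i=0}^{σ−1} (n−e−i)/(n−i)) · (∏_{i=0}^{e−2} (n−i)/(n−2σ−i)) ≥ 1. -/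
open Finset

/-- `(∏_{i=0}^{σ-1} (n-e-i)/(n-i)) · (∏_{i=0}^{e-2} (n-i)/(n-2σ-i)) ≥ 1`
for `2 ≤ e ≤ σ` and `n - e + 1 > 2σ`. -/
theorem prod_ratio_small_e (n e σ : ℕ) (hn : 0 < n) (hσ : 0 < σ)
    (he2 : 2 ≤ e) (heσ : e ≤ σ) (h : 2 * σ < n - e + 1) :
    (∏ i ∈ Finset.range σ, ((n : ℝ) - e - i) / ((n : ℝ) - i)) *
      (∏ i ∈ Finset.range (e - 1), ((n : ℝ) - i) / ((n : ℝ) - 2 * σ - i)) ≥ 1 := by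
  obtain ⟨t, rfl⟩ : ∃ t, e = 2 + t := ⟨e - 2, by omega⟩
  obtain ⟨s, rfl⟩ : ∃ s, σ = 2 + t + s := ⟨σ - (2 + t), by omega⟩
  have hbig : 2 * (2 + t + s) + (2 + t) ≤ n := by omega
  have hN : (2:ℝ) * (2 + (t:ℝ) + s) + (2 + (t:ℝ)) ≤ n := by exact_mod_cast hbig
  have hs0 : (0:ℝ) ≤ s := Nat.cast_nonneg s
  have ht0 : (0:ℝ) ≤ t := Nat.cast_nonneg t
  rw [show 2 + t - 1 = t + 1 from by omega]
  push_cast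
  have hC : 0 < ∏ i ∈ Finset.range s, ((n:ℝ) - (2 + (t:ℝ)) - i) := by
    apply Finset.prod_pos
    intro i hi
    simp only [Finset.mem_range] at hi
    have : (i:ℝ) < s := by exact_mod_cast hi
    linarith
  have hD : 0 < ∏ i ∈ Finset.range (t+1), ((n:ℝ) - i) := by
    apply Finset.prod_pos
    intro i hi
    simp only [Finset.mem_range] at hi
    have : (i:ℝ) < t + 1 := by exact_mod_cast hi
    linarith
  have hF : 0 < ∏ i ∈ Finset.range (t+1), ((n:ℝ) - 2 * (2 + (t:ℝ) + s) - i) := by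
    apply Finset.prod_pos
    intro i hi
    simp only [Finset.mem_range] at hi
    have : (i:ℝ) < t + 1 := by exact_mod_cast hi
    linarith
  have hNt : (0:ℝ) < (n:ℝ) - ((t:ℝ) + 1) := by linarith
  have e1 : ∏ x ∈ Finset.range (2 + t + s), ((n:ℝ) - (2 + (t:ℝ)) - x)
      = (∏ i ∈ Finset.range s, ((n:ℝ) - (2 + (t:ℝ)) - i))
        * ∏ j ∈ Finset.range (2 + t), ((n:ℝ) - (2 + (t:ℝ) + s) - j) := by
    rw [show 2 + t + s = s + (2 + t) from by omega, Finset.prod_range_add]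
    congr 1
    refine Finset.prod_congr rfl fun j _ => ?_
    push_cast; ring
  have e2 : ∏ x ∈ Finset.range (2 + t + s), ((n:ℝ) - x)
      = (∏ i ∈ Finset.range (t+1), ((n:ℝ) - i))
        * ((∏ i ∈ Finset.range s, ((n:ℝ) - (2 + (t:ℝ)) - i)) * ((n:ℝ) - ((t:ℝ) + 1))) := by
    rw [show 2 + t + s = (t+1) + (s+1) from by omega, Finset.prod_range_add]
    congr 1
    rw [Finset.prod_range_succ']
    congr 1
    · refine Finset.prod_congr rfl fun j _ => ?_
      push_cast; ring
    · push_cast; ring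
  have key : ((n:ℝ) - ((t:ℝ) + 1)) * ∏ i ∈ Finset.range (t+1), ((n:ℝ) - 2 * (2 + (t:ℝ) + s) - i)
      ≤ ∏ j ∈ Finset.range (2 + t), ((n:ℝ) - (2 + (t:ℝ) + s) - j) := by
    have eE : ∏ j ∈ Finset.range (2 + t), ((n:ℝ) - (2 + (t:ℝ) + s) - j)
        = ((∏ j ∈ Finset.range t, ((n:ℝ) - (2 + (t:ℝ) + s) - ((j:ℝ)+1))) * ((n:ℝ) - (2 + (t:ℝ) + s)))
          * ((n:ℝ) - (2 + (t:ℝ) + s) - ((t:ℝ)+1)) := by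
      rw [show 2 + t = t + 1 + 1 from by omega, Finset.prod_range_succ, Finset.prod_range_succ']
      congr 1
      congr 1
      · refine Finset.prod_congr rfl fun j _ => ?_
        push_cast; ring
      · push_cast; ring
      · push_cast; ring
    have eF : ∏ i ∈ Finset.range (t+1), ((n:ℝ) - 2 * (2 + (t:ℝ) + s) - i)
        = (∏ j ∈ Finset.range t, ((n:ℝ) - 2 * (2 + (t:ℝ) + s) - ((j:ℝ)+1)))
          * ((n:ℝ) - 2 * (2 + (t:ℝ) + s)) := by
      rw [Finset.prod_range_succ']
      congr 1
      · refine Finset.prod_congr rfl fun j _ => ?_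
        push_cast; ring
      · push_cast; ring
    rw [eE, eF]
    have hP : ∏ j ∈ Finset.range t, ((n:ℝ) - 2 * (2 + (t:ℝ) + s) - ((j:ℝ)+1))
        ≤ ∏ j ∈ Finset.range t, ((n:ℝ) - (2 + (t:ℝ) + s) - ((j:ℝ)+1)) := by
      apply Finset.prod_le_prod
      · intro j hj
        simp only [Finset.mem_range] at hj
        have : (j:ℝ) < t := by exact_mod_cast hj
        linarith
      · intro j hj
        linarith
    have hP1 : (0:ℝ) ≤ ∏ j ∈ Finset.range t, ((n:ℝ) - (2 + (t:ℝ) + s) - ((j:ℝ)+1)) := by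
      apply Finset.prod_nonneg
      intro j hj
      simp only [Finset.mem_range] at hj
      have : (j:ℝ) < t := by exact_mod_cast hj
      linarith
    have hq : (0:ℝ) ≤ (2 + (t:ℝ) + s) * (1 + s) := by positivity
    have hQ : ((n:ℝ) - ((t:ℝ)+1)) * ((n:ℝ) - 2 * (2 + (t:ℝ) + s))
        ≤ ((n:ℝ) - (2 + (t:ℝ) + s)) * ((n:ℝ) - (2 + (t:ℝ) + s) - ((t:ℝ)+1)) := by
      nlinarith [hq]
    have hQ0 : (0:ℝ) ≤ ((n:ℝ) - ((t:ℝ)+1)) * ((n:ℝ) - 2 * (2 + (t:ℝ) + s)) := by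
      apply mul_nonneg <;> linarith
    nlinarith [mul_le_mul hP hQ hQ0 hP1]
  rw [Finset.prod_div_distrib, Finset.prod_div_distrib, e1, e2, ge_iff_le]
  have main : ∀ C D E F G : ℝ, 0 < C → 0 < D → 0 < F → 0 < G → G * F ≤ E →
      1 ≤ (C * E) / (D * (C * G)) * (D / F) := by
    intro C D E F G hC hD hF hG hGF
    rw [div_mul_div_comm, le_div_iff₀ (by positivity)]
    nlinarith [mul_le_mul_of_nonneg_left hGF (le_of_lt (mul_pos hC hD))]
  exact main _ _ _ _ _ hC hD hF hNt key
end

section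
/- Let G be a graph consisting of two vertices u and v joined by t ≥ 1 internally vertex-disjoint paths P_1, ..., P_t, with edge-cost functions c_1,...,c_t where an edge e on path P_i has c_i(e) = 1 and c_j(e) = 1/(t+1) for all j ≠ i. Then every cut of G containing exactly one edge from each path is pareto-optimal: (a) every such cut F has c_i(F) = 2t/(t+1) for all i ∈ [t]; (b) every cut F' containing at least two edges of some path P_i has c_i(F') = 2 > 2t/(t+1); (c) no cut dominates a cut containing exactly one edge from each path. -/
open Finset

/-- Vertices of the graph made of two vertices `u = inl true`, `v = inl false` joined by
`t` internally disjoint paths, path `i` having `L i` edges (so `L i - 1` internal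
vertices). -/
abbrev PathVert (t : ℕ) (L : Fin t → ℕ) := Bool ⊕ (Σ i : Fin t, Fin (L i - 1))

/-- Edges: the `j`-th edge of path `i`, for `j : Fin (L i)`. -/
abbrev PathEdge (t : ℕ) (L : Fin t → ℕ) := Σ i : Fin t, Fin (L i)

/-- Endpoints of the `j`-th edge of path `i`: it joins the `(j-1)`-th and the `j`-th
node along path `i`, where node `-1` is `u` and node `L i - 1` is `v`. -/
def pathEnds {t : ℕ} {L : Fin t → ℕ} (e : PathEdge t L) :
    PathVert t L × PathVert t L :=
  (if h : (e.2 : ℕ) = 0 then Sum.inl true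
    else Sum.inr ⟨e.1, ⟨(e.2 : ℕ) - 1, by have := e.2.isLt; omega⟩⟩,
   if h : (e.2 : ℕ) + 1 = L e.1 then Sum.inl false
    else Sum.inr ⟨e.1, ⟨(e.2 : ℕ), by have := e.2.isLt; omega⟩⟩)

/-- the `k`-th vertex along path `i` (`0` is `u`, `L i` is `v`). -/
def posV {t : ℕ} (L : Fin t → ℕ) (i : Fin t) (k : ℕ) : PathVert t L :=
  if h0 : k = 0 then Sum.inl true
  else if h : k < L i then Sum.inr ⟨i, ⟨k - 1, by omega⟩⟩
  else Sum.inl false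

lemma posV_zero {t : ℕ} (L : Fin t → ℕ) (i : Fin t) : posV L i 0 = Sum.inl true := rfl

lemma posV_last {t : ℕ} (L : Fin t → ℕ) (i : Fin t) (h : 1 ≤ L i) :
    posV L i (L i) = Sum.inl false := by
  unfold posV; rw [dif_neg (by omega), dif_neg (by omega)]

lemma posV_mid {t : ℕ} (L : Fin t → ℕ) (i : Fin t) (m : Fin (L i - 1)) :
    posV L i (m + 1) = Sum.inr ⟨i, m⟩ := by
  have := m.isLt
  unfold posV
  rw [dif_neg (by omega), dif_pos (by omega)]
  simp

lemma pathEnds_eq {t : ℕ} {L : Fin t → ℕ} (i : Fin t) (j : Fin (L i)) :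
    pathEnds (⟨i, j⟩ : PathEdge t L) = (posV L i j, posV L i (j + 1)) := by
  have hj := j.isLt
  unfold pathEnds posV
  dsimp only
  refine Prod.ext ?_ ?_ <;> dsimp only <;> split_ifs <;>
    first | rfl | omega | simp_all

lemma cnt_succ (g : ℕ → Bool) (n : ℕ) :
    ((range (n+1)).filter fun k => g k ≠ g (k+1)).card
      = ((range n).filter fun k => g k ≠ g (k+1)).card
        + (if g n = g (n+1) then 0 else 1) := by
  rw [range_add_one, filter_insert]
  by_cases h : g n = g (n+1)
  · simp [h]
  · rw [if_pos h, if_neg h, card_insert_of_notMem (fun hm => by simp at hm)]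

lemma cnt_parity (g : ℕ → Bool) (n : ℕ) :
    ((range n).filter fun k => g k ≠ g (k+1)).card % 2
      = (if g 0 = g n then 0 else 1) := by
  induction n with
  | zero => simp
  | succ n ih =>
    rw [cnt_succ]
    rcases Bool.eq_false_or_eq_true (g 0) with h0 | h0 <;>
      rcases Bool.eq_false_or_eq_true (g n) with h1 | h1 <;>
      rcases Bool.eq_false_or_eq_true (g (n+1)) with h2 | h2 <;>
      simp [h0, h1, h2] at ih ⊢ <;> omega

lemma cnt_zero (g : ℕ → Bool) (n : ℕ)
    (h : ((range n).filter fun k => g k ≠ g (k+1)).card = 0)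
    (k : ℕ) : k ≤ n → g k = g 0 := by
  rw [card_eq_zero, filter_eq_empty_iff] at h
  induction k with
  | zero => intro _; rfl
  | succ k ih =>
    intro hk
    have h1 : g k = g (k+1) := by
      have := h (mem_range.mpr (by omega : k < n)); simpa using this
    rw [← h1]; exact ih (by omega)

lemma filter_fst_card {t : ℕ} {L : Fin t → ℕ} (F : Finset (PathEdge t L)) (i : Fin t) :
    (F.filter (fun e => e.1 = i)).card
      = (univ.filter (fun j : Fin (L i) => (⟨i, j⟩ : PathEdge t L) ∈ F)).card := by
  rw [eq_comm]
  refine card_bij (fun j _ => (⟨i, j⟩ : PathEdge t L)) ?_ ?_ ?_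
  · intro j hj
    exact mem_filter.mpr ⟨(mem_filter.mp hj).2, rfl⟩
  · intro a _ b _ h
    simpa using h
  · rintro ⟨i', j⟩ he
    obtain ⟨h1, h2⟩ := mem_filter.mp he
    dsimp only at h2
    subst h2
    exact ⟨j, mem_filter.mpr ⟨mem_univ _, h1⟩, rfl⟩

lemma fin_filter_card (n : ℕ) (P : ℕ → Prop) [DecidablePred P] :
    (univ.filter (fun j : Fin n => P j)).card = ((range n).filter P).card := by
  refine card_nbij (fun j => (j : ℕ)) ?_ ?_ ?_
  · intro j hj
    simp only [mem_coe, mem_filter, mem_univ, true_and] at hj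
    exact mem_filter.mpr ⟨mem_range.mpr j.isLt, hj⟩
  · intro a _ b _ h
    exact Fin.ext h
  · intro k hk
    simp only [Set.mem_image, mem_coe, mem_filter, mem_range] at *
    exact ⟨⟨k, hk.1⟩, by simp [hk.2], rfl⟩

/-- `F` is a cut of the multigraph with endpoint map `ends`. -/
def IsCutOf {V E : Type*} [Fintype V] [DecidableEq V] [Fintype E] [DecidableEq E]
    (ends : E → V × V) (F : Finset E) : Prop :=
  ∃ U : Finset V, U.Nonempty ∧ U ≠ Finset.univ ∧
    F = Finset.univ.filter (fun e =>
      ((ends e).1 ∈ U ∧ (ends e).2 ∉ U) ∨ ((ends e).1 ∉ U ∧ (ends e).2 ∈ U))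

/-- `F` dominates `F'` with respect to the cost functions `c`. -/
def DominatesOf {E : Type*} {t : ℕ} (c : Fin t → E → ℝ) (F F' : Finset E) : Prop :=
  (∀ i, ∑ e ∈ F, c i e ≤ ∑ e ∈ F', c i e) ∧ (∃ i, ∑ e ∈ F, c i e < ∑ e ∈ F', c i e)

/-- dichotomy: every cut has either one edge on each path, or two edges on some path -/
lemma cut_dichotomy {t : ℕ} (ht : 1 ≤ t) {L : Fin t → ℕ} (hL : ∀ i, 1 ≤ L i)
    (F' : Finset (PathEdge t L)) (hF' : IsCutOf pathEnds F') :
    (∃ i, 2 ≤ (F'.filter (fun e => e.1 = i)).card) ∨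
    (∀ i, (F'.filter (fun e => e.1 = i)).card = 1) := by
  obtain ⟨U, hUne, hUuniv, hFU⟩ := hF'
  set g : Fin t → ℕ → Bool := fun i k => decide (posV L i k ∈ U) with hg
  have hmem : ∀ (i : Fin t) (j : Fin (L i)),
      ((⟨i, j⟩ : PathEdge t L) ∈ F') ↔ (g i j ≠ g i (j + 1)) := by
    intro i j
    rw [hFU, mem_filter, pathEnds_eq]
    simp only [mem_univ, true_and, hg, ne_eq, decide_eq_decide]
    tauto
  have hcnt : ∀ i, (F'.filter (fun e => e.1 = i)).card
      = ((range (L i)).filter (fun k => g i k ≠ g i (k+1))).card := by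
    intro i
    rw [filter_fst_card]
    rw [show (univ.filter (fun j : Fin (L i) => (⟨i, j⟩ : PathEdge t L) ∈ F'))
        = univ.filter (fun j : Fin (L i) => g i (j : ℕ) ≠ g i ((j : ℕ)+1)) from by
      apply filter_congr; intro j _; exact hmem i j]
    exact fin_filter_card (L i) (fun k => g i k ≠ g i (k+1))
  have hg0 : ∀ i : Fin t, g i 0 = decide ((Sum.inl true : PathVert t L) ∈ U) := fun i => rfl
  have hgL : ∀ i : Fin t, g i (L i) = decide ((Sum.inl false : PathVert t L) ∈ U) := by
    intro i
    have h2 : posV L i (L i) = Sum.inl false := posV_last L i (hL i)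
    simp only [hg, h2]
  by_cases hex : ∃ i, 2 ≤ (F'.filter (fun e => e.1 = i)).card
  · exact Or.inl hex
  push_neg at hex
  right
  by_cases hsep : ((Sum.inl true : PathVert t L) ∈ U ↔ (Sum.inl false : PathVert t L) ∈ U)
  · -- same side : contradiction, cut would be trivial
    exfalso
    have hzero : ∀ i, ((range (L i)).filter (fun k => g i k ≠ g i (k+1))).card = 0 := by
      intro i
      have hpar := cnt_parity (g i) (L i)
      have heq : g i 0 = g i (L i) := by
        rw [hg0, hgL, decide_eq_decide]; exact hsep
      rw [if_pos heq] at hpar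
      have h1 := hex i
      rw [hcnt i] at h1
      omega
    have hall : ∀ x : PathVert t L, (x ∈ U ↔ (Sum.inl true : PathVert t L) ∈ U) := by
      intro x
      have key : ∀ (i : Fin t) (k : ℕ), k ≤ L i → (posV L i k ∈ U ↔ (Sum.inl true : PathVert t L) ∈ U) := by
        intro i k hk
        have := cnt_zero (g i) (L i) (hzero i) k hk
        rw [hg0] at this
        simpa [hg, decide_eq_decide] using this
      rcases x with b | ⟨i, m⟩
      · rcases b with _ | _
        · -- false : v
          have := key ⟨0, by omega⟩ (L ⟨0, by omega⟩) le_rfl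
          rwa [posV_last _ _ (hL _)] at this
        · exact Iff.rfl
      · have hm := m.isLt
        have := key i (m + 1) (by omega)
        rwa [posV_mid] at this
    by_cases hu : (Sum.inl true : PathVert t L) ∈ U
    · exact hUuniv (eq_univ_of_forall (fun x => (hall x).mpr hu))
    · obtain ⟨x, hx⟩ := hUne
      exact hu ((hall x).mp hx)
  · -- u, v separated : each count is odd, hence exactly 1
    intro i
    have hpar := cnt_parity (g i) (L i)
    have hne : g i 0 ≠ g i (L i) := by
      rw [hg0, hgL, ne_eq, decide_eq_decide]; exact hsep
    rw [if_neg hne] at hpar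
    have h1 := hex i
    rw [hcnt i] at h1 ⊢
    omega

/-- In the `t`-path graph with costs `c i e = 1` if `e` lies on path `i` and
`1/(t+1)` otherwise, every cut containing exactly one edge from each path is
pareto-optimal. -/
theorem path_graph_pareto (t : ℕ) (ht : 1 ≤ t) (L : Fin t → ℕ) (hL : ∀ i, 1 ≤ L i)
    (c : Fin t → PathEdge t L → ℝ)
    (hc : ∀ i e, c i e = if e.1 = i then (1 : ℝ) else 1 / (t + 1)) :
    (∀ F : Finset (PathEdge t L), IsCutOf pathEnds F →
      (∀ i, (F.filter (fun e => e.1 = i)).card = 1) →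
      ∀ i, ∑ e ∈ F, c i e = 2 * t / (t + 1)) ∧
    (∀ F' : Finset (PathEdge t L), IsCutOf pathEnds F' →
      ∀ i, 2 ≤ (F'.filter (fun e => e.1 = i)).card →
      (2 ≤ ∑ e ∈ F', c i e ∧ 2 * (t : ℝ) / (t + 1) < 2)) ∧
    (∀ F : Finset (PathEdge t L), IsCutOf pathEnds F →
      (∀ i, (F.filter (fun e => e.1 = i)).card = 1) →
      ∀ F' : Finset (PathEdge t L), IsCutOf pathEnds F' → ¬ DominatesOf c F' F) := by
  have htR : (0:ℝ) < (t:ℝ) + 1 := by positivity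
  have parta : ∀ F : Finset (PathEdge t L), IsCutOf pathEnds F →
      (∀ i, (F.filter (fun e => e.1 = i)).card = 1) →
      ∀ i, ∑ e ∈ F, c i e = 2 * t / (t + 1) := by
    intro F _ hF i
    have hcard : F.card = t := by
      rw [card_eq_sum_card_fiberwise (f := Sigma.fst) (t := univ) (fun x _ => mem_univ _)]
      simp [hF]
    have hone : (F.filter (fun e => e.1 = i)).card = 1 := hF i
    have hnot : (F.filter (fun e => ¬ e.1 = i)).card = t - 1 := by
      have := card_filter_add_card_filter_not (s := F) (p := fun e => e.1 = i)
      omega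
    rw [← sum_filter_add_sum_filter_not F (fun e => e.1 = i)]
    have h1 : ∑ e ∈ F.filter (fun e => e.1 = i), c i e = 1 := by
      rw [sum_congr rfl (g := fun _ => (1:ℝ))
        (fun e he => by rw [hc]; simp [(mem_filter.mp he).2])]
      simp [hone]
    have h2 : ∑ e ∈ F.filter (fun e => ¬ e.1 = i), c i e = ((t:ℝ) - 1) * (1/((t:ℝ)+1)) := by
      rw [sum_congr rfl (g := fun _ => (1/((t:ℝ)+1)))
        (fun e he => by rw [hc]; simp [(mem_filter.mp he).2])]
      rw [sum_const, hnot, nsmul_eq_mul]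
      congr 1
      push_cast [Nat.cast_sub ht]
      ring
    rw [h1, h2]
    field_simp
    ring
  have partb1 : ∀ F' : Finset (PathEdge t L), ∀ i : Fin t,
      2 ≤ (F'.filter (fun e => e.1 = i)).card → 2 ≤ ∑ e ∈ F', c i e := by
    intro F' i h2
    have hsub : ∑ e ∈ F'.filter (fun e => e.1 = i), c i e ≤ ∑ e ∈ F', c i e := by
      apply sum_le_sum_of_subset_of_nonneg (filter_subset _ _)
      intro e _ _
      rw [hc]
      split_ifs <;> positivity
    have heq : ∑ e ∈ F'.filter (fun e => e.1 = i), c i e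
        = ((F'.filter (fun e => e.1 = i)).card : ℝ) := by
      rw [sum_congr rfl (g := fun _ => (1:ℝ))
        (fun e he => by rw [hc]; simp [(mem_filter.mp he).2])]
      simp
    have : (2:ℝ) ≤ ((F'.filter (fun e => e.1 = i)).card : ℝ) := by exact_mod_cast h2
    linarith
  have partb2 : 2 * (t:ℝ) / (t + 1) < 2 := by
    rw [div_lt_iff₀ htR]
    linarith
  refine ⟨parta, fun F' hF' i h2 => ⟨partb1 F' i h2, partb2⟩, ?_⟩
  intro F hF hF1 F' hF' hdom
  obtain ⟨hle, i0, hlt⟩ := hdom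
  rcases cut_dichotomy ht hL F' hF' with ⟨i, hi⟩ | hall
  · have h1 := hle i
    have h2 := parta F hF hF1 i
    have h3 := partb1 F' i hi
    rw [h2] at h1
    linarith
  · have h1 := parta F' hF' hall i0
    have h2 := parta F hF hF1 i0
    rw [h1, h2] at hlt
    exact lt_irrefl _ hlt
end

section
/- Let n, e, σ be positive integers with n − e + 1 > 2σ and e > σ. Then (∏_{i=0}^{σ−1} (n−e−i)/(n−i)) · (2σ)!/(∏_{i=0}^{2σ−1} (n−e+1−i)) ≥ (2σ)!/(∏_{i=0}^{2σ−1} (n−i)) = 1/C(n, 2σ). -/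
open Finset

/-- The case `e > σ` of the binomial ratio inequality, in product form:
`(∏_{i=0}^{σ-1} (n-e-i)/(n-i)) · (2σ)!/(∏_{i=0}^{2σ-1}(n-e+1-i))
  ≥ (2σ)!/(∏_{i=0}^{2σ-1}(n-i)) = 1/C(n,2σ)`. -/
theorem prod_ratio_large_e (n e σ : ℕ) (hn : 0 < n) (he0 : 0 < e) (hσ : 0 < σ)
    (h : 2 * σ < n - e + 1) (heσ : σ < e) :
    ((∏ i ∈ Finset.range σ, ((n : ℝ) - e - i) / ((n : ℝ) - i)) *
        (((2 * σ).factorial : ℝ) / ∏ i ∈ Finset.range (2 * σ), ((n : ℝ) - e + 1 - i)) ≥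
      ((2 * σ).factorial : ℝ) / ∏ i ∈ Finset.range (2 * σ), ((n : ℝ) - i)) ∧
    ((2 * σ).factorial : ℝ) / (∏ i ∈ Finset.range (2 * σ), ((n : ℝ) - i)) =
      1 / (n.choose (2 * σ) : ℝ) := by
  have hn' : e + 2 * σ ≤ n := by omega
  have hNr : (e : ℝ) + 2 * σ ≤ n := by exact_mod_cast hn'
  have hE : (σ : ℝ) + 1 ≤ e := by exact_mod_cast heσ
  have hσr : (1 : ℝ) ≤ σ := by exact_mod_cast hσ
  set N : ℝ := (n : ℝ) with hN
  have hDpos : ∀ i ∈ Finset.range (2 * σ), 0 < N - i := by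
    intro i hi
    simp only [Finset.mem_range] at hi
    have : (i : ℝ) < 2 * σ := by exact_mod_cast hi
    nlinarith
  have hCpos : ∀ i ∈ Finset.range (2 * σ), 0 < N - e + 1 - i := by
    intro i hi
    simp only [Finset.mem_range] at hi
    have : (i : ℝ) < 2 * σ := by exact_mod_cast hi
    nlinarith
  have hBpos : ∀ i ∈ Finset.range σ, 0 < N - i := by
    intro i hi
    simp only [Finset.mem_range] at hi
    have : (i : ℝ) < σ := by exact_mod_cast hi
    nlinarith
  have hApos : ∀ i ∈ Finset.range σ, 0 < N - e - i := by
    intro i hi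
    simp only [Finset.mem_range] at hi
    have : (i : ℝ) < σ := by exact_mod_cast hi
    nlinarith
  have hDp : 0 < ∏ i ∈ Finset.range (2 * σ), (N - i) := Finset.prod_pos hDpos
  have hCp : 0 < ∏ i ∈ Finset.range (2 * σ), (N - e + 1 - i) := Finset.prod_pos hCpos
  have hBp : 0 < ∏ i ∈ Finset.range σ, (N - i) := Finset.prod_pos hBpos
  have hAp : 0 < ∏ i ∈ Finset.range σ, (N - e - i) := Finset.prod_pos hApos
  have hFp : (0 : ℝ) < ((2 * σ).factorial : ℝ) := by positivity
  constructor
  · -- main inequality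
    have hsplitD : (∏ i ∈ Finset.range (2 * σ), (N - i)) =
        (∏ i ∈ Finset.range σ, (N - i)) * ∏ i ∈ Finset.range σ, (N - (σ + i)) := by
      rw [two_mul, Finset.prod_range_add]
      congr 1
      apply Finset.prod_congr rfl
      intro i _
      push_cast
      ring
    have hsplitC : (∏ i ∈ Finset.range (2 * σ), (N - e + 1 - i)) =
        (∏ i ∈ Finset.range σ, (N - e + 1 - i)) *
          ∏ i ∈ Finset.range σ, (N - e + 1 - (σ + i)) := by
      rw [two_mul, Finset.prod_range_add]
      congr 1
      apply Finset.prod_congr rfl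
      intro i _
      push_cast
      ring
    have key : (∏ i ∈ Finset.range σ, ((N - e + 1 - i) * (N - e + 1 - (σ + i)))) ≤
        ∏ i ∈ Finset.range σ, ((N - e - i) * (N - (σ + i))) := by
      apply Finset.prod_le_prod
      · intro i hi
        simp only [Finset.mem_range] at hi
        have hx : (i : ℝ) < σ := by exact_mod_cast hi
        have h1 : 0 ≤ N - e + 1 - i := by nlinarith
        have h2 : 0 ≤ N - e + 1 - (σ + i) := by nlinarith
        positivity
      · intro i hi
        simp only [Finset.mem_range] at hi
        have hx : (i : ℝ) < σ := by exact_mod_cast hi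
        have h1 : N - e + 1 - i ≤ N - (σ + i) := by linarith
        have h2 : N - e + 1 - (σ + i) ≤ N - e - i := by linarith
        have h3 : 0 ≤ N - e + 1 - (σ + i) := by nlinarith
        have h4 : 0 ≤ N - (σ + i) := by nlinarith
        calc (N - e + 1 - i) * (N - e + 1 - (σ + i))
            ≤ (N - (σ + i)) * (N - e - i) := mul_le_mul h1 h2 h3 h4
          _ = (N - e - i) * (N - (σ + i)) := by ring
    have key2 : (∏ i ∈ Finset.range σ, (N - i)) *
        (∏ i ∈ Finset.range (2 * σ), (N - e + 1 - i)) ≤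
        (∏ i ∈ Finset.range σ, (N - e - i)) * ∏ i ∈ Finset.range (2 * σ), (N - i) := by
      rw [hsplitC, hsplitD]
      calc (∏ i ∈ Finset.range σ, (N - i)) *
          ((∏ i ∈ Finset.range σ, (N - e + 1 - i)) *
            ∏ i ∈ Finset.range σ, (N - e + 1 - (σ + i)))
          = (∏ i ∈ Finset.range σ, (N - i)) *
            ∏ i ∈ Finset.range σ, ((N - e + 1 - i) * (N - e + 1 - (σ + i))) := by
            rw [Finset.prod_mul_distrib]
        _ ≤ (∏ i ∈ Finset.range σ, (N - i)) *
            ∏ i ∈ Finset.range σ, ((N - e - i) * (N - (σ + i))) :=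
            mul_le_mul_of_nonneg_left key hBp.le
        _ = (∏ i ∈ Finset.range σ, (N - e - i)) *
            ((∏ i ∈ Finset.range σ, (N - i)) * ∏ i ∈ Finset.range σ, (N - (σ + i))) := by
            rw [Finset.prod_mul_distrib]; ring
    rw [ge_iff_le, Finset.prod_div_distrib, div_mul_div_comm,
      div_le_div_iff₀ hDp (mul_pos hBp hCp)]
    calc ((2 * σ).factorial : ℝ) *
        ((∏ i ∈ Finset.range σ, (N - i)) * ∏ i ∈ Finset.range (2 * σ), (N - e + 1 - i))
        ≤ ((2 * σ).factorial : ℝ) *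
          ((∏ i ∈ Finset.range σ, (N - e - i)) * ∏ i ∈ Finset.range (2 * σ), (N - i)) :=
          mul_le_mul_of_nonneg_left key2 hFp.le
      _ = (∏ i ∈ Finset.range σ, (N - e - i)) * ((2 * σ).factorial : ℝ) *
          ∏ i ∈ Finset.range (2 * σ), (N - i) := by ring
  · -- equality with choose
    have h2n : 2 * σ ≤ n := by omega
    have hprod : (∏ i ∈ Finset.range (2 * σ), (N - i)) = (n.descFactorial (2 * σ) : ℝ) := by
      rw [Nat.descFactorial_eq_prod_range, Nat.cast_prod]
      apply Finset.prod_congr rfl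
      intro i hi
      simp only [Finset.mem_range] at hi
      have hin : i ≤ n := by omega
      rw [Nat.cast_sub hin]
    have hchoose : 0 < n.choose (2 * σ) := Nat.choose_pos h2n
    have hcr : (0 : ℝ) < (n.choose (2 * σ) : ℝ) := by exact_mod_cast hchoose
    rw [hprod, Nat.descFactorial_eq_factorial_mul_choose]
    push_cast
    field_simp
end

section
/- Let a_2, ..., a_r, b_2, ..., b_r and q_2, ..., q_r be nonnegative reals satisfying 0 ≤ b_j ≤ a_j for all j, ∑_{j=2}^r a_j = 1, and γ·∑_{j=2}^r b_j ≤ ∑_{j=2}^r j·a_j for some real γ ≥ r+1 > 2. Then ∑_{j=2}^r (a_j − b_j)·q_j ≥ min_{2 ≤ j ≤ r} (1 − j/(γ−r+j))·q_j, provided each q_j > 0. -/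
open Finset

/-- Lower-bound direction of the LP lemma: every feasible point of the LP has
objective value at least `min_{2 ≤ j ≤ r} (1 - j/(γ-r+j))·q_j`. -/
theorem lp_lower_bound (r : ℕ) (hr : 2 < r + 1) (γ : ℝ) (hγ : (r : ℝ) + 1 ≤ γ)
    (a b q : ℕ → ℝ)
    (hab : ∀ j ∈ Finset.Icc 2 r, 0 ≤ b j ∧ b j ≤ a j)
    (ha : ∑ j ∈ Finset.Icc 2 r, a j = 1)
    (hconstr : γ * ∑ j ∈ Finset.Icc 2 r, b j ≤ ∑ j ∈ Finset.Icc 2 r, (j : ℝ) * a j)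
    (hq : ∀ j ∈ Finset.Icc 2 r, 0 < q j) :
    ∑ j ∈ Finset.Icc 2 r, (a j - b j) * q j ≥
      (Finset.Icc 2 r).inf' (Finset.nonempty_Icc.mpr (by omega))
        (fun j => (1 - (j : ℝ) / (γ - r + j)) * q j) := by
  set m := (Finset.Icc 2 r).inf' (Finset.nonempty_Icc.mpr (by omega))
        (fun j => (1 - (j : ℝ) / (γ - r + j)) * q j) with hm
  have hγr : (1:ℝ) ≤ γ - r := by linarith
  have hpos : ∀ j ∈ Finset.Icc 2 r, (0:ℝ) < γ - r + j := by
    intro j hj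
    have : (0:ℝ) ≤ (j:ℝ) := by positivity
    linarith
  -- m is positive
  have hmpos : 0 < m := by
    obtain ⟨j, hj, hje⟩ := Finset.exists_mem_eq_inf' (s := Finset.Icc 2 r)
      (Finset.nonempty_Icc.mpr (by omega)) (fun j => (1 - (j : ℝ) / (γ - r + j)) * q j)
    rw [hm, hje]
    have h2 := hpos j hj
    have h3 : (j:ℝ) / (γ - r + j) < 1 := by
      rw [div_lt_one h2]; linarith
    have := hq j hj
    nlinarith
  have hmle : ∀ j ∈ Finset.Icc 2 r, m ≤ (1 - (j:ℝ)/(γ-r+j)) * q j :=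
    fun j hj => Finset.inf'_le _ hj
  -- pointwise bound: m * ((γ-r+j)/(γ-r)) ≤ q j
  have hq' : ∀ j ∈ Finset.Icc 2 r, m * ((γ - r + j)/(γ - r)) ≤ q j := by
    intro j hj
    have h1 := hmle j hj
    have h2 := hpos j hj
    have heq : (1 - (j:ℝ)/(γ-r+j)) * q j = (γ-r)/(γ-r+j) * q j := by
      rw [show (1 - (j:ℝ)/(γ-r+j)) = (γ-r)/(γ-r+j) by field_simp; ring]
    rw [heq] at h1
    have h3 : 0 < (γ - r + j)/(γ - r) := div_pos h2 (by linarith)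
    have := mul_le_mul_of_nonneg_right h1 h3.le
    calc m * ((γ - r + j)/(γ - r)) ≤ (γ-r)/(γ-r+j) * q j * ((γ - r + j)/(γ - r)) := this
      _ = q j := by field_simp
  -- key sum inequality
  have hrb : ∑ j ∈ Finset.Icc 2 r, (j:ℝ) * b j ≤ (r:ℝ) * ∑ j ∈ Finset.Icc 2 r, b j := by
    rw [Finset.mul_sum]
    refine Finset.sum_le_sum fun j hj => ?_
    have hjr : (j:ℝ) ≤ (r:ℝ) := by
      exact_mod_cast (Finset.mem_Icc.mp hj).2
    exact mul_le_mul_of_nonneg_right hjr (hab j hj).1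
  have hS : γ - r ≤ ∑ j ∈ Finset.Icc 2 r, (a j - b j) * (γ - r + j) := by
    have e : ∑ j ∈ Finset.Icc 2 r, (a j - b j) * (γ - r + j)
        = (γ-r) * (∑ j ∈ Finset.Icc 2 r, a j) - (γ-r) * (∑ j ∈ Finset.Icc 2 r, b j)
          + (∑ j ∈ Finset.Icc 2 r, (j:ℝ) * a j) - ∑ j ∈ Finset.Icc 2 r, (j:ℝ) * b j := by
      simp only [Finset.mul_sum, ← Finset.sum_sub_distrib, ← Finset.sum_add_distrib]
      exact Finset.sum_congr rfl fun j hj => by ring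
    rw [e, ha]
    nlinarith [hconstr, hrb]
  -- combine
  have hmain : m * ((γ - r)⁻¹ * ∑ j ∈ Finset.Icc 2 r, (a j - b j) * (γ - r + j))
      ≤ ∑ j ∈ Finset.Icc 2 r, (a j - b j) * q j := by
    rw [Finset.mul_sum, Finset.mul_sum]
    refine Finset.sum_le_sum fun j hj => ?_
    have h1 := hq' j hj
    have h2 : 0 ≤ a j - b j := by have := hab j hj; linarith [this.2]
    calc m * ((γ - r)⁻¹ * ((a j - b j) * (γ - r + j)))
        = (a j - b j) * (m * ((γ - r + j)/(γ - r))) := by ring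
      _ ≤ (a j - b j) * q j := mul_le_mul_of_nonneg_left h1 h2
  have hfin : m ≤ m * ((γ - r)⁻¹ * ∑ j ∈ Finset.Icc 2 r, (a j - b j) * (γ - r + j)) := by
    have h1 : (1:ℝ) ≤ (γ - r)⁻¹ * ∑ j ∈ Finset.Icc 2 r, (a j - b j) * (γ - r + j) := by
      have h2 := mul_le_mul_of_nonneg_left hS (by positivity : (0:ℝ) ≤ (γ - r)⁻¹)
      have h3 : (γ - r)⁻¹ * (γ - r) = 1 := inv_mul_cancel₀ (by linarith)
      linarith
    nlinarith
  exact le_trans hfin hmain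
end
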